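/- Let H be a finite nonabelian simple group and let k ≥ 2 be an integer. Then the direct power G = H × ⋯ × H (k factors) satisfies ω(G) ≥ 7. -/

import Mathlib

set_option linter.unusedSectionVars false
set_option maxHeartbeats 1000000

open Subgroup

section OrbitCount

variable {G : Type*} [Group G]

/-- automorphism-invariant data of an element -/
noncomputable def inv2 (g : G) : ℕ × ℕ :=
  (orderOf g, Nat.card (Subgroup.centralizer ({g} : Set G)))

lemma map_centralizer_single (φ : MulAut G) (g : G) :
    (Subgroup.centralizer ({g} : Set G)).map φ.toMonoidHom
      = Subgroup.centralizer ({φ g} : Set G) := by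
  ext x
  simp only [Subgroup.mem_map, Subgroup.mem_centralizer_iff, Set.mem_singleton_iff,
    forall_eq]
  constructor
  · rintro ⟨y, hy, rfl⟩
    have : φ (g * y) = φ (y * g) := by rw [hy]
    simpa [map_mul] using this
  · intro hx
    refine ⟨φ.symm x, ?_, by simp⟩
    have : φ.symm (φ g * x) = φ.symm (x * φ g) := by rw [hx]
    simpa [map_mul] using this

lemma inv2_smul (φ : MulAut G) (g : G) : inv2 (φ • g) = inv2 g := by
  have h1 : orderOf (φ • g) = orderOf g :=
    orderOf_injective φ.toMonoidHom φ.injective g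
  have h2 : Nat.card (Subgroup.centralizer ({φ • g} : Set G))
      = Nat.card (Subgroup.centralizer ({g} : Set G)) := by
    rw [show (φ • g) = φ g from rfl, ← map_centralizer_single φ g]
    exact (Nat.card_congr (Subgroup.equivMapOfInjective _ _ φ.injective).toEquiv.symm)
  unfold inv2
  rw [h1]
  exact congrArg (Prod.mk _) h2

lemma seven_le_card_quot [Finite G] (g : Fin 7 → G)
    (hinj : ∀ i j : Fin 7, inv2 (g i) = inv2 (g j) → i = j) :
    7 ≤ Nat.card (MulAction.orbitRel.Quotient (MulAut G) G) := by
  have : Function.Injective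
      (fun i => (Quotient.mk'' (g i) : MulAction.orbitRel.Quotient (MulAut G) G)) := by
    intro i j hij
    apply hinj
    have hrel : (MulAction.orbitRel (MulAut G) G) (g i) (g j) := Quotient.eq''.mp hij
    rw [MulAction.orbitRel_apply] at hrel
    obtain ⟨φ, hφ⟩ := hrel
    rw [← hφ, inv2_smul]
  simpa using Nat.card_le_card_of_injective _ this

end OrbitCount

open Subgroup

section Prod

variable {H : Type*} [Group H] [Finite H] {k : ℕ}

/-- element of `Fin k → H` supported at two coordinates -/
def ee (i0 i1 : Fin k) (u v : H) : Fin k → H :=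
  fun i => if i = i0 then u else if i = i1 then v else 1

variable {i0 i1 : Fin k}

lemma ee_apply0 (u v : H) : ee i0 i1 u v i0 = u := by simp [ee]

lemma ee_apply1 (h01 : i0 ≠ i1) (u v : H) : ee i0 i1 u v i1 = v := by
  simp [ee, h01.symm]

lemma ee_pow (u v : H) (n : ℕ) : (ee i0 i1 u v) ^ n = ee i0 i1 (u ^ n) (v ^ n) := by
  funext i
  simp only [Pi.pow_apply, ee]
  split_ifs <;> simp

lemma orderOf_ee (h01 : i0 ≠ i1) (u v : H) : orderOf (ee i0 i1 u v) = Nat.lcm (orderOf u) (orderOf v) := by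
  apply Nat.dvd_antisymm
  · apply orderOf_dvd_of_pow_eq_one
    rw [ee_pow]
    have hu : u ^ Nat.lcm (orderOf u) (orderOf v) = 1 :=
      orderOf_dvd_iff_pow_eq_one.mp (Nat.dvd_lcm_left _ _)
    have hv : v ^ Nat.lcm (orderOf u) (orderOf v) = 1 :=
      orderOf_dvd_iff_pow_eq_one.mp (Nat.dvd_lcm_right _ _)
    rw [hu, hv]
    funext i; simp [ee]
  · have h := pow_orderOf_eq_one (ee i0 i1 u v)
    rw [ee_pow] at h
    have hu : u ^ orderOf (ee i0 i1 u v) = 1 := by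
      have := congrFun h i0; simpa [ee] using this
    have hv : v ^ orderOf (ee i0 i1 u v) = 1 := by
      have := congrFun h i1
      rw [ee_apply1 h01] at this
      simpa [ee] using this
    exact Nat.lcm_dvd (orderOf_dvd_iff_pow_eq_one.mpr hu) (orderOf_dvd_iff_pow_eq_one.mpr hv)

lemma centralizer_pi (g : Fin k → H) :
    Subgroup.centralizer ({g} : Set (Fin k → H))
      = Subgroup.pi Set.univ (fun i => Subgroup.centralizer ({g i} : Set H)) := by
  ext h
  simp only [Subgroup.mem_centralizer_iff, Set.mem_singleton_iff, forall_eq,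
    Subgroup.mem_pi, Set.mem_univ, forall_true_left]
  constructor
  · intro hh i
    exact congrFun hh i
  · intro hh
    funext i
    exact hh i

lemma card_pi_subgroup (S : Fin k → Subgroup H) :
    Nat.card (Subgroup.pi Set.univ S) = ∏ i, Nat.card (S i) := by
  have e : (Subgroup.pi Set.univ S) ≃ (∀ i, S i) := by
    refine ⟨fun g i => ⟨g.1 i, (Subgroup.mem_pi _).mp g.2 i (Set.mem_univ i)⟩,
      fun f => ⟨fun i => f i, (Subgroup.mem_pi _).mpr (fun i _ => (f i).2)⟩, fun g => rfl, fun f => rfl⟩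
  rw [Nat.card_congr e, Nat.card_pi]

/-- the residual product over the remaining coordinates -/
noncomputable def RR (i0 i1 : Fin k) (H : Type*) [Group H] : ℕ :=
  ∏ i ∈ (Finset.univ.erase i0).erase i1,
    Nat.card (Subgroup.centralizer ({(1 : H)} : Set H))

lemma RR_pos : 0 < RR i0 i1 H := by
  apply Finset.prod_pos
  intro i _
  exact Nat.card_pos

lemma card_centralizer_ee (h01 : i0 ≠ i1) (u v : H) :
    Nat.card (Subgroup.centralizer ({ee i0 i1 u v} : Set (Fin k → H)))
      = Nat.card (Subgroup.centralizer ({u} : Set H))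
        * (Nat.card (Subgroup.centralizer ({v} : Set H)) * RR i0 i1 H) := by
  rw [centralizer_pi, card_pi_subgroup]
  have h1mem : i1 ∈ Finset.univ.erase i0 := by
    simp [Finset.mem_erase, h01.symm]
  rw [← Finset.mul_prod_erase Finset.univ _ (Finset.mem_univ i0),
    ← Finset.mul_prod_erase _ _ h1mem]
  rw [ee_apply0, ee_apply1 h01]
  congr 1
  congr 1
  apply Finset.prod_congr rfl
  intro i hi
  simp only [Finset.mem_erase] at hi
  have : ee i0 i1 u v i = 1 := by simp [ee, hi.1, hi.2.1]
  rw [this]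

end Prod

open Subgroup

section Hfacts

variable {H : Type*} [Group H] [Finite H]

lemma center_eq_bot_of_simple (hs : IsSimpleGroup H)
    (hna : ¬ ∀ a b : H, a * b = b * a) : Subgroup.center H = ⊥ := by
  rcases (Subgroup.center H).normal_of_characteristic.eq_bot_or_eq_top with h | h
  · exact h
  · exfalso
    apply hna
    intro a b
    have hb : b ∈ Subgroup.center H := h ▸ Subgroup.mem_top b
    exact Subgroup.mem_center_iff.mp hb a

lemma card_centralizer_lt (hs : IsSimpleGroup H)
    (hna : ¬ ∀ a b : H, a * b = b * a) {u : H} (hu : u ≠ 1) :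
    Nat.card (Subgroup.centralizer ({u} : Set H)) < Nat.card H := by
  have hne : Subgroup.centralizer ({u} : Set H) ≠ ⊤ := by
    intro htop
    have : u ∈ Subgroup.center H := by
      rw [Subgroup.mem_center_iff]
      intro g
      have hg : g ∈ Subgroup.centralizer ({u} : Set H) := htop ▸ Subgroup.mem_top g
      exact (Subgroup.mem_centralizer_iff.mp hg u rfl).symm
    rw [center_eq_bot_of_simple hs hna, Subgroup.mem_bot] at this
    exact hu this
  have hdvd := Subgroup.card_subgroup_dvd_card (Subgroup.centralizer ({u} : Set H))
  have hne2 : Nat.card (Subgroup.centralizer ({u} : Set H)) ≠ Nat.card H := by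
    intro h
    exact hne ((Subgroup.card_eq_iff_eq_top _).mp h)
  exact lt_of_le_of_ne (Nat.le_of_dvd Nat.card_pos hdvd) hne2

lemma card_centralizer_one : Nat.card (Subgroup.centralizer ({(1 : H)} : Set H)) = Nat.card H := by
  have : Subgroup.centralizer ({(1 : H)} : Set H) = ⊤ := by
    ext g; simp [Subgroup.mem_centralizer_iff]
  rw [this, Subgroup.card_top]

end Hfacts

open Subgroup

section Helpers

lemma two_mul_le_of_dvd_ne {d m : ℕ} (hm : m ≠ 0) (hdvd : d ∣ m) (hne : d ≠ m) :
    2 * d ≤ m := by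
  obtain ⟨t, rfl⟩ := hdvd
  have ht0 : t ≠ 0 := by rintro rfl; simp at hm
  have ht1 : t ≠ 1 := by rintro rfl; simp at hne
  have : 2 ≤ t := by omega
  calc 2 * d = d * 2 := by ring
    _ ≤ d * t := Nat.mul_le_mul_left d this
    _ = d * t := rfl

lemma nat_card_sigma {ι : Type*} [Fintype ι] (f : ι → Type*) [∀ i, Finite (f i)] :
    Nat.card (Σ i, f i) = ∑ i, Nat.card (f i) := by
  classical
  letI : ∀ i, Fintype (f i) := fun i => Fintype.ofFinite _
  simp [Nat.card_eq_fintype_card, Fintype.card_sigma]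

lemma nat_card_ne {α : Type*} [Finite α] (a : α) :
    Nat.card {x : α // x ≠ a} = Nat.card α - 1 := by
  classical
  letI := Fintype.ofFinite α
  simp only [Nat.card_eq_fintype_card]
  have h1 : Fintype.card {x : α // x = a} = 1 := Fintype.card_subtype_eq a
  have := Fintype.card_subtype_compl (fun x : α => x = a)
  rw [h1] at this
  convert this using 2

end Helpers

section CaseC

variable {G : Type*} [Group G] [Finite G]

/-- In a hypothetical "hard case" group, each prime side occupies less than half of the group. -/
lemma caseC_side (hs : IsSimpleGroup G) {p q : ℕ} (hp : p.Prime) (hq : q.Prime) (hpq : p ≠ q)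
    (hord : ∀ g : G, orderOf g = 1 ∨ orderOf g = p ∨ orderOf g = q)
    (hcp : ∀ g g' : G, orderOf g = p → orderOf g' = p →
      Nat.card (Subgroup.centralizer ({g} : Set G)) = Nat.card (Subgroup.centralizer ({g'} : Set G)))
    (hx : ∃ x : G, orderOf x = p) (hy : ∃ y : G, orderOf y = q) :
    2 * Nat.card {g : G // orderOf g = p} + 2 ≤ Nat.card G := by
  classical
  haveI : Fact p.Prime := ⟨hp⟩
  obtain ⟨x0, hx0⟩ := hx
  obtain ⟨y0, hy0⟩ := hy
  have hN0 : Nat.card G ≠ 0 := Nat.card_pos.ne'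
  have hpd : p ∣ Nat.card G := hx0 ▸ orderOf_dvd_natCard x0
  have hqd : q ∣ Nat.card G := hy0 ▸ orderOf_dvd_natCard y0
  have hcop : Nat.Coprime p q := (Nat.coprime_primes hp hq).mpr hpq
  have hpq1 : 1 < p * q := by
    have := hp.one_lt; have := hq.one_lt; nlinarith
  have hpqp : p < p * q := by
    have := hp.pos; have := hq.one_lt; nlinarith
  have hpqq : q < p * q := by
    have := hq.pos; have := hp.one_lt; nlinarith
  -- centralizers of order-p elements are p-groups
  have hCp : ∀ x : G, orderOf x = p →
      IsPGroup p (Subgroup.centralizer ({x} : Set G)) := by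
    intro x hxp h
    refine ⟨1, ?_⟩
    have hcomm : Commute x (h : G) :=
      Subgroup.mem_centralizer_iff.mp h.2 x rfl
    have horder : orderOf (h : G) = 1 ∨ orderOf (h : G) = p := by
      rcases hord (h : G) with h1 | h1 | h1
      · exact Or.inl h1
      · exact Or.inr h1
      · exfalso
        have hmul : orderOf (x * (h : G)) = p * q := by
          rw [Commute.orderOf_mul_eq_mul_orderOf_of_coprime hcomm
            (by rw [hxp, h1]; exact hcop), hxp, h1]
        rcases hord (x * (h : G)) with h2 | h2 | h2 <;> rw [hmul] at h2
        · exact hpq1.ne' h2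
        · exact hpqp.ne' h2
        · exact hpqq.ne' h2
    have hpow : (h : G) ^ p = 1 := by
      rcases horder with h1 | h1
      · rw [orderOf_eq_one_iff] at h1; rw [h1]; simp
      · rw [← h1]; exact pow_orderOf_eq_one _
    ext
    rw [pow_one, Subgroup.coe_pow, hpow]
    rfl
  -- notation
  set a := (Nat.card G).factorization p with ha
  have hapos : 0 < a := hp.factorization_pos_of_dvd hN0 hpd
  have hcardP : ∀ P : Sylow p G, Nat.card (P : Subgroup G) = p ^ a :=
    fun P => Sylow.card_eq_multiplicity P
  have hpa1 : 1 < p ^ a := Nat.one_lt_pow hapos.ne' hp.one_lt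
  have hqpa : ¬ q ∣ p ^ a := by
    intro hdvd
    exact hpq (((Nat.prime_dvd_prime_iff_eq hq hp).mp (hq.dvd_of_dvd_pow hdvd)).symm)
  -- nontrivial elements of Sylows have order p
  have hordP : ∀ (P : Sylow p G) (g : G), g ∈ (P : Subgroup G) → g ≠ 1 → orderOf g = p := by
    intro P g hg hg1
    have hdvd : orderOf g ∣ p ^ a := by
      rw [← hcardP P]; exact Subgroup.orderOf_dvd_natCard _ hg
    rcases hord g with h1 | h1 | h1
    · exact absurd (orderOf_eq_one_iff.mp h1) hg1
    · exact h1
    · exact absurd (h1 ▸ hdvd) hqpa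
  -- a distinguished central element of a fixed Sylow
  obtain ⟨P0⟩ : Nonempty (Sylow p G) := Sylow.nonempty
  haveI hPnt : Nontrivial (P0 : Subgroup G) := by
    rw [← Finite.one_lt_card_iff_nontrivial, hcardP P0]; exact hpa1
  haveI hcnt : Nontrivial (Subgroup.center ((P0 : Subgroup G))) :=
    IsPGroup.center_nontrivial P0.2
  obtain ⟨z0s, hz0s⟩ := exists_ne (1 : Subgroup.center ((P0 : Subgroup G)))
  set z0 : G := ((z0s : (P0 : Subgroup G)) : G) with hz0
  have hz0ne : z0 ≠ 1 := by
    intro h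
    exact hz0s (Subtype.ext (Subtype.ext h))
  have hz0mem : z0 ∈ (P0 : Subgroup G) := ((z0s : (P0 : Subgroup G))).2
  have hz0ord : orderOf z0 = p := hordP P0 z0 hz0mem hz0ne
  have hP0le : (P0 : Subgroup G) ≤ Subgroup.centralizer ({z0} : Set G) := by
    intro g hg
    rw [Subgroup.mem_centralizer_iff]
    intro m hm
    rcases hm with rfl
    have := Subgroup.mem_center_iff.mp z0s.2 ⟨g, hg⟩
    exact congrArg Subtype.val this.symm
  have hCz0card : Nat.card (Subgroup.centralizer ({z0} : Set G)) = p ^ a := by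
    have hle : p ^ a ≤ Nat.card (Subgroup.centralizer ({z0} : Set G)) := by
      rw [← hcardP P0]; exact Subgroup.card_le_of_le hP0le
    obtain ⟨Q, hQ⟩ := (hCp z0 hz0ord).exists_le_sylow
    have hdvd : Nat.card (Subgroup.centralizer ({z0} : Set G)) ∣ p ^ a := by
      rw [← hcardP Q]; exact Subgroup.card_dvd_of_le hQ
    exact le_antisymm (Nat.le_of_dvd (by positivity) hdvd) hle
  have hccpa : ∀ x : G, orderOf x = p →
      Nat.card (Subgroup.centralizer ({x} : Set G)) = p ^ a :=
    fun x hxp => (hcp x z0 hxp hz0ord).trans hCz0card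
  -- the Sylow attached to an order-p element
  let F : {g : G // orderOf g = p} → Sylow p G :=
    fun x => Sylow.ofCard (Subgroup.centralizer ({x.1} : Set G)) (hccpa x.1 x.2)
  have hFcoe : ∀ x, ((F x : Subgroup G)) = Subgroup.centralizer ({x.1} : Set G) :=
    fun x => Sylow.coe_ofCard _ _
  -- the "center part" of a Sylow
  let ZS : Sylow p G → Subgroup G :=
    fun P => Subgroup.centralizer (((P : Subgroup G) : Set G)) ⊓ (P : Subgroup G)
  have hfiber : ∀ (x : {g : G // orderOf g = p}) (P : Sylow p G),
      F x = P ↔ (x.1 ∈ ZS P ∧ x.1 ≠ 1) := by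
    intro x P
    have hxne : x.1 ≠ 1 := by
      intro h
      have := x.2
      rw [h, orderOf_one] at this
      exact hp.one_lt.ne' this.symm
    constructor
    · intro hFP
      have hC : Subgroup.centralizer ({x.1} : Set G) = (P : Subgroup G) := by
        rw [← hFcoe x, hFP]
      refine ⟨Subgroup.mem_inf.mpr ⟨?_, ?_⟩, hxne⟩
      · rw [Subgroup.mem_centralizer_iff]
        intro h hh
        have : h ∈ Subgroup.centralizer ({x.1} : Set G) := by rw [hC]; exact hh
        exact (Subgroup.mem_centralizer_iff.mp this x.1 rfl).symm
      · rw [← hC]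
        rw [Subgroup.mem_centralizer_iff]
        intro m hm
        rcases hm with rfl
        rfl
    · rintro ⟨hmem, -⟩
      obtain ⟨hc, hm⟩ := Subgroup.mem_inf.mp hmem
      have hle : (P : Subgroup G) ≤ Subgroup.centralizer ({x.1} : Set G) := by
        intro g hg
        rw [Subgroup.mem_centralizer_iff]
        intro m hm'
        rcases hm' with rfl
        exact (Subgroup.mem_centralizer_iff.mp hc g hg).symm
      have heq : (P : Subgroup G) = Subgroup.centralizer ({x.1} : Set G) :=
        Subgroup.eq_of_le_of_card_ge hle (by rw [hccpa x.1 x.2, hcardP P])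
      apply Sylow.ext
      rw [hFcoe x, heq]
  -- counting: the number of order-p elements
  letI : Fintype (Sylow p G) := Fintype.ofFinite _
  have hsum : Nat.card {g : G // orderOf g = p}
      = ∑ P : Sylow p G, (Nat.card (ZS P) - 1) := by
    have e1 : {g : G // orderOf g = p}
        ≃ Σ P : Sylow p G, {x : {g : G // orderOf g = p} // F x = P} :=
      (Equiv.sigmaFiberEquiv F).symm
    have e2 : ∀ P : Sylow p G,
        {x : {g : G // orderOf g = p} // F x = P} ≃ {y : (ZS P) // y ≠ 1} := by
      intro P
      refine ⟨fun x => ⟨⟨x.1.1, ((hfiber x.1 P).mp x.2).1⟩, ?_⟩,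
        fun y => ⟨⟨y.1.1, ?_⟩, ?_⟩, ?_, ?_⟩
      · intro h
        exact ((hfiber x.1 P).mp x.2).2 (congrArg Subtype.val h)
      · have hyP : y.1.1 ∈ (P : Subgroup G) := (Subgroup.mem_inf.mp y.1.2).2
        have hyne : y.1.1 ≠ 1 := by
          intro h
          exact y.2 (Subtype.ext h)
        exact hordP P y.1.1 hyP hyne
      · apply (hfiber _ P).mpr
        constructor
        · exact y.1.2
        · intro h
          exact y.2 (Subtype.ext h)
      · intro x; rfl
      · intro y; rfl
    calc Nat.card {g : G // orderOf g = p}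
        = Nat.card (Σ P : Sylow p G, {x : {g : G // orderOf g = p} // F x = P}) :=
          Nat.card_congr e1
      _ = ∑ P : Sylow p G, Nat.card {x : {g : G // orderOf g = p} // F x = P} :=
          nat_card_sigma _
      _ = ∑ P : Sylow p G, (Nat.card (ZS P) - 1) := by
          apply Finset.sum_congr rfl
          intro P _
          rw [Nat.card_congr (e2 P), nat_card_ne]
  -- Sylow numbers
  have hnp_pos : 0 < Nat.card (Sylow p G) := Nat.card_pos
  have hNfact : p ^ a * (P0 : Subgroup G).index = Nat.card G := by
    rw [← hcardP P0]; exact Subgroup.card_mul_index _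
  have hqb_pos : (P0 : Subgroup G).index ≠ 0 := by
    intro h; rw [h, Nat.mul_zero] at hNfact; exact hN0 hNfact.symm
  have hindex : ∀ P : Sylow p G, (P : Subgroup G).index = (P0 : Subgroup G).index := by
    intro P
    have h1 := Subgroup.card_mul_index (P : Subgroup G)
    rw [hcardP P] at h1
    rw [← hNfact] at h1
    exact Nat.eq_of_mul_eq_mul_left (by positivity) h1
  have hnp_dvd : Nat.card (Sylow p G) ∣ (P0 : Subgroup G).index :=
    Sylow.card_dvd_index P0
  have hZSdvd : ∀ P : Sylow p G, Nat.card (ZS P) ∣ p ^ a := by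
    intro P
    rw [← hcardP P]
    exact Subgroup.card_dvd_of_le inf_le_right
  have hZSpos : ∀ P : Sylow p G, 0 < Nat.card (ZS P) := fun P => Nat.card_pos
  -- the main bound : ∑ 2 * (card ZS P) ≤ card G
  have hmain : ∑ P : Sylow p G, 2 * Nat.card (ZS P) ≤ Nat.card G := by
    by_cases hcase : Nat.card (Sylow p G) = (P0 : Subgroup G).index
    · by_cases habel : ∃ P : Sylow p G, Nat.card (ZS P) = p ^ a
      · -- Burnside's normal p-complement theorem gives a contradiction
        exfalso
        obtain ⟨P, hP⟩ := habel
        have hZP : ZS P = (P : Subgroup G) :=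
          Subgroup.eq_of_le_of_card_ge inf_le_right (by rw [hcardP P, hP])
        have hPcent : (P : Subgroup G) ≤ Subgroup.centralizer (((P : Subgroup G) : Set G)) :=
          le_of_eq hZP.symm |>.trans inf_le_left
        have hnorm : Subgroup.normalizer ((P : Subgroup G) : Set G) = (P : Subgroup G) := by
          have h1 : Nat.card (Sylow p G) = Nat.card (G ⧸ Subgroup.normalizer ((P : Subgroup G) : Set G)) :=
            Sylow.card_eq_card_quotient_normalizer P
          have h2 : (Subgroup.normalizer ((P : Subgroup G) : Set G)).index = (P0 : Subgroup G).index := by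
            rw [Subgroup.index_eq_card, ← h1, hcase]
          have h3 : Nat.card (Subgroup.normalizer ((P : Subgroup G) : Set G)) = p ^ a := by
            have h4 := Subgroup.card_mul_index (Subgroup.normalizer ((P : Subgroup G) : Set G))
            rw [h2, ← hNfact] at h4
            exact Nat.eq_of_mul_eq_mul_right (Nat.pos_of_ne_zero hqb_pos) h4
          exact (Subgroup.eq_of_le_of_card_ge Subgroup.le_normalizer
            (by rw [h3, hcardP P])).symm
        have hP' : Subgroup.normalizer ((P : Subgroup G) : Set G)
            ≤ Subgroup.centralizer (((P : Subgroup G) : Set G)) := by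
          rw [hnorm]; exact hPcent
        have hcompl := MonoidHom.ker_transferSylow_isComplement' P hP'
        have hker : (MonoidHom.transferSylow P hP').ker.Normal := MonoidHom.normal_ker _
        rcases hs.eq_bot_or_eq_top_of_normal _ hker with hbot | htop
        · have hcm := hcompl.card_mul
          rw [hbot, Subgroup.card_bot, one_mul, hcardP P] at hcm
          -- p ^ a = card G, so q divides p ^ a
          rw [← hcm] at hqd
          exact hqpa hqd
        · have hcm := hcompl.card_mul
          rw [htop, Subgroup.card_top, hcardP P] at hcm
          have : p ^ a = 1 := by
            have h5 : Nat.card G * p ^ a = Nat.card G * 1 := by rw [Nat.mul_one]; exact hcm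
            exact Nat.eq_of_mul_eq_mul_left (Nat.pos_of_ne_zero hN0) h5
          exact hpa1.ne' this
      · push_neg at habel
        calc ∑ P : Sylow p G, 2 * Nat.card (ZS P)
            ≤ ∑ _P : Sylow p G, p ^ a := by
              apply Finset.sum_le_sum
              intro P _
              exact two_mul_le_of_dvd_ne (by positivity) (hZSdvd P) (habel P)
          _ = Nat.card (Sylow p G) * p ^ a := by
              rw [Finset.sum_const, Finset.card_univ, smul_eq_mul]
              rw [Nat.card_eq_fintype_card]
          _ = Nat.card G := by rw [hcase, Nat.mul_comm]; exact hNfact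
    · have h2np : 2 * Nat.card (Sylow p G) ≤ (P0 : Subgroup G).index :=
        two_mul_le_of_dvd_ne hqb_pos hnp_dvd hcase
      have hZSle : ∀ P : Sylow p G, Nat.card (ZS P) ≤ p ^ a := by
        intro P
        exact Nat.le_of_dvd (by positivity) (hZSdvd P)
      calc ∑ P : Sylow p G, 2 * Nat.card (ZS P)
          ≤ ∑ _P : Sylow p G, 2 * p ^ a := by
            apply Finset.sum_le_sum
            intro P _
            exact Nat.mul_le_mul_left 2 (hZSle P)
        _ = Nat.card (Sylow p G) * (2 * p ^ a) := by
            rw [Finset.sum_const, Finset.card_univ, smul_eq_mul, Nat.card_eq_fintype_card]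
        _ = (2 * Nat.card (Sylow p G)) * p ^ a := by ring
        _ ≤ (P0 : Subgroup G).index * p ^ a := Nat.mul_le_mul_right _ h2np
        _ = Nat.card G := by rw [Nat.mul_comm]; exact hNfact
  -- conclude
  have hfin : Nat.card {g : G // orderOf g = p} + Nat.card (Sylow p G)
      = ∑ P : Sylow p G, Nat.card (ZS P) := by
    have hone : Nat.card (Sylow p G) = ∑ _P : Sylow p G, 1 := by
      simp [Nat.card_eq_fintype_card]
    rw [hsum, hone, ← Finset.sum_add_distrib]
    apply Finset.sum_congr rfl
    intro P _
    have := hZSpos P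
    omega
  have h2 : ∑ P : Sylow p G, 2 * Nat.card (ZS P)
      = 2 * (Nat.card {g : G // orderOf g = p} + Nat.card (Sylow p G)) := by
    rw [hfin, Finset.mul_sum]
  omega

end CaseC

open Subgroup

section Helpers2

lemma nat_card_ne' {α : Type*} [Finite α] (a : α) :
    Nat.card {x : α // x ≠ a} = Nat.card α - 1 := by
  classical
  letI := Fintype.ofFinite α
  simp only [Nat.card_eq_fintype_card]
  have h1 : Fintype.card {x : α // x = a} = 1 := Fintype.card_subtype_eq a
  have := Fintype.card_subtype_compl (fun x : α => x = a)
  rw [h1] at this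
  convert this using 2

variable {G : Type*} [Group G] [Finite G]

lemma partition_card {p q : ℕ} (hp : p.Prime) (hq : q.Prime) (hpq : p ≠ q)
    (hord : ∀ g : G, orderOf g = 1 ∨ orderOf g = p ∨ orderOf g = q) :
    Nat.card {g : G // orderOf g = p} + Nat.card {g : G // orderOf g = q} + 1
      = Nat.card G := by
  classical
  have e0 : {g : G // orderOf g ≠ 1} ≃ {g : G // g ≠ 1} :=
    Equiv.subtypeEquivRight (fun g => by simp [orderOf_eq_one_iff])
  have h0 : Nat.card {g : G // orderOf g ≠ 1} = Nat.card G - 1 := by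
    rw [Nat.card_congr e0, nat_card_ne']
  have e1 : {g : G // orderOf g ≠ 1}
      ≃ {g : G // orderOf g = p} ⊕ {g : G // orderOf g = q} := by
    refine ⟨fun g => if h : orderOf g.1 = p then Sum.inl ⟨g.1, h⟩ else Sum.inr ⟨g.1, ?_⟩,
      Sum.elim (fun g => ⟨g.1, by rw [g.2]; exact hp.ne_one⟩)
        (fun g => ⟨g.1, by rw [g.2]; exact hq.ne_one⟩), ?_, ?_⟩
    · rcases hord g.1 with h1 | h1 | h1
      · exact absurd h1 g.2
      · exact absurd h1 h
      · exact h1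
    · intro g
      by_cases h : orderOf g.1 = p <;> simp [h]
    · intro s
      rcases s with g | g
      · simp [g.2]
      · have hne : orderOf g.1 ≠ p := by rw [g.2]; exact fun h => hpq h.symm
        simp [hne]
  have h1 := Nat.card_congr e1
  rw [h0] at h1
  rw [Nat.card_sum] at h1
  have hN : 0 < Nat.card G := Nat.card_pos
  omega

end Helpers2

open Subgroup

section Glue

lemma pair_ne_fst {a b c d : ℕ} (h : a ≠ c) : (a, b) ≠ (c, d) :=
  fun he => h (congrArg Prod.fst he)

lemma pair_ne_snd {a b c d : ℕ} (h : b ≠ d) : (a, b) ≠ (c, d) :=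
  fun he => h (congrArg Prod.snd he)

lemma cancelL {a b c R : ℕ} (ha : 0 < a) (hR : 0 < R) (h : b ≠ c) :
    a * (b * R) ≠ a * (c * R) := by
  intro he
  exact h (Nat.eq_of_mul_eq_mul_right hR (Nat.eq_of_mul_eq_mul_left ha he))

lemma cancelR {a b K : ℕ} (hK : 0 < K) (h : a ≠ b) : a * K ≠ b * K := by
  intro he
  exact h (Nat.eq_of_mul_eq_mul_right hK he)

lemma crossStrict {a b c d R : ℕ} (hR : 0 < R) (h1 : a < c) (h2 : b < d) :
    a * (b * R) ≠ c * (d * R) := by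
  have : a * (b * R) < c * (d * R) :=
    mul_lt_mul'' h1 ((Nat.mul_lt_mul_right hR).mpr h2) (Nat.zero_le _) (Nat.zero_le _)
  exact this.ne

lemma swapCancel {a b c R : ℕ} (ha : 0 < a) (hR : 0 < R) (h : b ≠ c) :
    a * (b * R) ≠ c * (a * R) := by
  intro he
  have he' : a * (b * R) = a * (c * R) := by rw [he]; ring
  exact cancelL ha hR h he'

end Glue

section Seven

variable {G : Type*} [Group G] [Finite G]

lemma seven_distinct (g0 g1 g2 g3 g4 g5 g6 : G)
    (h01 : inv2 g0 ≠ inv2 g1) (h02 : inv2 g0 ≠ inv2 g2) (h03 : inv2 g0 ≠ inv2 g3)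
    (h04 : inv2 g0 ≠ inv2 g4) (h05 : inv2 g0 ≠ inv2 g5) (h06 : inv2 g0 ≠ inv2 g6)
    (h12 : inv2 g1 ≠ inv2 g2) (h13 : inv2 g1 ≠ inv2 g3) (h14 : inv2 g1 ≠ inv2 g4)
    (h15 : inv2 g1 ≠ inv2 g5) (h16 : inv2 g1 ≠ inv2 g6) (h23 : inv2 g2 ≠ inv2 g3)
    (h24 : inv2 g2 ≠ inv2 g4) (h25 : inv2 g2 ≠ inv2 g5) (h26 : inv2 g2 ≠ inv2 g6)
    (h34 : inv2 g3 ≠ inv2 g4) (h35 : inv2 g3 ≠ inv2 g5) (h36 : inv2 g3 ≠ inv2 g6)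
    (h45 : inv2 g4 ≠ inv2 g5) (h46 : inv2 g4 ≠ inv2 g6) (h56 : inv2 g5 ≠ inv2 g6) :
    7 ≤ Nat.card (MulAction.orbitRel.Quotient (MulAut G) G) := by
  apply seven_le_card_quot ![g0, g1, g2, g3, g4, g5, g6]
  intro i j hij
  fin_cases i <;> fin_cases j <;>
    first
      | rfl
      | (exact absurd hij (by assumption))
      | (exact absurd hij.symm (by assumption))

end Seven

open Subgroup

section Cases

variable {H : Type*} [Group H] [Finite H]

lemma caseA_seven (hs : IsSimpleGroup H) (hna : ¬ ∀ a b : H, a * b = b * a)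
    {k : ℕ} {i0 i1 : Fin k} (h01 : i0 ≠ i1)
    {p q : ℕ} (hp : p.Prime) (hq : q.Prime) (hpq : p ≠ q)
    {x y z : H} (hxp : orderOf x = p) (hyq : orderOf y = q)
    (hz1 : orderOf z ≠ 1) (hzp : orderOf z ≠ p) (hzq : orderOf z ≠ q) :
    7 ≤ Nat.card (MulAction.orbitRel.Quotient (MulAut (Fin k → H)) (Fin k → H)) := by
  have hR : 0 < RR i0 i1 H := RR_pos
  have hx1 : x ≠ 1 := fun h => hp.ne_one (by rw [← hxp, h, orderOf_one])
  have hy1 : y ≠ 1 := fun h => hq.ne_one (by rw [← hyq, h, orderOf_one])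
  have hz1' : z ≠ 1 := fun h => hz1 (by rw [h, orderOf_one])
  have hI : ∀ u v : H, inv2 (ee i0 i1 u v)
      = (Nat.lcm (orderOf u) (orderOf v),
          Nat.card (Subgroup.centralizer ({u} : Set H))
            * (Nat.card (Subgroup.centralizer ({v} : Set H)) * RR i0 i1 H)) := by
    intro u v
    rw [inv2, orderOf_ee h01, card_centralizer_ee h01]
  have hcx : Nat.card (Subgroup.centralizer ({x} : Set H)) < Nat.card H :=
    card_centralizer_lt hs hna hx1
  have hcy : Nat.card (Subgroup.centralizer ({y} : Set H)) < Nat.card H :=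
    card_centralizer_lt hs hna hy1
  have hcz : Nat.card (Subgroup.centralizer ({z} : Set H)) < Nat.card H :=
    card_centralizer_lt hs hna hz1'
  have cpos : ∀ u : H, 0 < Nat.card (Subgroup.centralizer ({u} : Set H)) :=
    fun u => Nat.card_pos
  have E0 : inv2 (ee i0 i1 (1 : H) 1)
      = (1, Nat.card H * (Nat.card H * RR i0 i1 H)) := by
    rw [hI, card_centralizer_one, orderOf_one, Nat.lcm_self]
  have E1 : inv2 (ee i0 i1 x 1)
      = (p, Nat.card (Subgroup.centralizer ({x} : Set H)) * (Nat.card H * RR i0 i1 H)) := by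
    rw [hI, hxp, orderOf_one, Nat.lcm_one_right, card_centralizer_one]
  have E2 : inv2 (ee i0 i1 y 1)
      = (q, Nat.card (Subgroup.centralizer ({y} : Set H)) * (Nat.card H * RR i0 i1 H)) := by
    rw [hI, hyq, orderOf_one, Nat.lcm_one_right, card_centralizer_one]
  have E3 : inv2 (ee i0 i1 z 1)
      = (orderOf z,
          Nat.card (Subgroup.centralizer ({z} : Set H)) * (Nat.card H * RR i0 i1 H)) := by
    rw [hI, orderOf_one, Nat.lcm_one_right, card_centralizer_one]
  have E4 : inv2 (ee i0 i1 x x)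
      = (p, Nat.card (Subgroup.centralizer ({x} : Set H))
          * (Nat.card (Subgroup.centralizer ({x} : Set H)) * RR i0 i1 H)) := by
    rw [hI, hxp, Nat.lcm_self]
  have E5 : inv2 (ee i0 i1 y y)
      = (q, Nat.card (Subgroup.centralizer ({y} : Set H))
          * (Nat.card (Subgroup.centralizer ({y} : Set H)) * RR i0 i1 H)) := by
    rw [hI, hyq, Nat.lcm_self]
  have E6 : inv2 (ee i0 i1 z z)
      = (orderOf z, Nat.card (Subgroup.centralizer ({z} : Set H))
          * (Nat.card (Subgroup.centralizer ({z} : Set H)) * RR i0 i1 H)) := by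
    rw [hI, Nat.lcm_self]
  apply seven_distinct (ee i0 i1 (1 : H) 1) (ee i0 i1 x 1) (ee i0 i1 y 1) (ee i0 i1 z 1)
    (ee i0 i1 x x) (ee i0 i1 y y) (ee i0 i1 z z)
  · rw [E0, E1]; exact pair_ne_fst (Ne.symm hp.ne_one)
  · rw [E0, E2]; exact pair_ne_fst (Ne.symm hq.ne_one)
  · rw [E0, E3]; exact pair_ne_fst (Ne.symm hz1)
  · rw [E0, E4]; exact pair_ne_fst (Ne.symm hp.ne_one)
  · rw [E0, E5]; exact pair_ne_fst (Ne.symm hq.ne_one)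
  · rw [E0, E6]; exact pair_ne_fst (Ne.symm hz1)
  · rw [E1, E2]; exact pair_ne_fst hpq
  · rw [E1, E3]; exact pair_ne_fst (Ne.symm hzp)
  · rw [E1, E4]; exact pair_ne_snd (cancelL (cpos x) hR hcx.ne')
  · rw [E1, E5]; exact pair_ne_fst hpq
  · rw [E1, E6]; exact pair_ne_fst (Ne.symm hzp)
  · rw [E2, E3]; exact pair_ne_fst (Ne.symm hzq)
  · rw [E2, E4]; exact pair_ne_fst (Ne.symm hpq)
  · rw [E2, E5]; exact pair_ne_snd (cancelL (cpos y) hR hcy.ne')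
  · rw [E2, E6]; exact pair_ne_fst (Ne.symm hzq)
  · rw [E3, E4]; exact pair_ne_fst hzp
  · rw [E3, E5]; exact pair_ne_fst hzq
  · rw [E3, E6]; exact pair_ne_snd (cancelL (cpos z) hR hcz.ne')
  · rw [E4, E5]; exact pair_ne_fst hpq
  · rw [E4, E6]; exact pair_ne_fst (Ne.symm hzp)
  · rw [E5, E6]; exact pair_ne_fst (Ne.symm hzq)

lemma caseB_seven (hs : IsSimpleGroup H) (hna : ¬ ∀ a b : H, a * b = b * a)
    {k : ℕ} {i0 i1 : Fin k} (h01 : i0 ≠ i1)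
    {r s : ℕ} (hr : r.Prime) (hs' : s.Prime) (hrs : r ≠ s)
    {x1 x2 w : H} (hx1 : orderOf x1 = r) (hx2 : orderOf x2 = r) (hw : orderOf w = s)
    (hlt : Nat.card (Subgroup.centralizer ({x1} : Set H))
      < Nat.card (Subgroup.centralizer ({x2} : Set H))) :
    7 ≤ Nat.card (MulAction.orbitRel.Quotient (MulAut (Fin k → H)) (Fin k → H)) := by
  have hR : 0 < RR i0 i1 H := RR_pos
  have hx1' : x1 ≠ 1 := fun h => hr.ne_one (by rw [← hx1, h, orderOf_one])
  have hx2' : x2 ≠ 1 := fun h => hr.ne_one (by rw [← hx2, h, orderOf_one])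
  have hw' : w ≠ 1 := fun h => hs'.ne_one (by rw [← hw, h, orderOf_one])
  have hI : ∀ u v : H, inv2 (ee i0 i1 u v)
      = (Nat.lcm (orderOf u) (orderOf v),
          Nat.card (Subgroup.centralizer ({u} : Set H))
            * (Nat.card (Subgroup.centralizer ({v} : Set H)) * RR i0 i1 H)) := by
    intro u v
    rw [inv2, orderOf_ee h01, card_centralizer_ee h01]
  have hc1 : Nat.card (Subgroup.centralizer ({x1} : Set H)) < Nat.card H :=
    card_centralizer_lt hs hna hx1'
  have hc2 : Nat.card (Subgroup.centralizer ({x2} : Set H)) < Nat.card H :=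
    card_centralizer_lt hs hna hx2'
  have hcw : Nat.card (Subgroup.centralizer ({w} : Set H)) < Nat.card H :=
    card_centralizer_lt hs hna hw'
  have cpos : ∀ u : H, 0 < Nat.card (Subgroup.centralizer ({u} : Set H)) :=
    fun u => Nat.card_pos
  have E0 : inv2 (ee i0 i1 (1 : H) 1)
      = (1, Nat.card H * (Nat.card H * RR i0 i1 H)) := by
    rw [hI, card_centralizer_one, orderOf_one, Nat.lcm_self]
  have E1 : inv2 (ee i0 i1 x1 1)
      = (r, Nat.card (Subgroup.centralizer ({x1} : Set H)) * (Nat.card H * RR i0 i1 H)) := by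
    rw [hI, hx1, orderOf_one, Nat.lcm_one_right, card_centralizer_one]
  have E2 : inv2 (ee i0 i1 x2 1)
      = (r, Nat.card (Subgroup.centralizer ({x2} : Set H)) * (Nat.card H * RR i0 i1 H)) := by
    rw [hI, hx2, orderOf_one, Nat.lcm_one_right, card_centralizer_one]
  have E3 : inv2 (ee i0 i1 w 1)
      = (s, Nat.card (Subgroup.centralizer ({w} : Set H)) * (Nat.card H * RR i0 i1 H)) := by
    rw [hI, hw, orderOf_one, Nat.lcm_one_right, card_centralizer_one]
  have E4 : inv2 (ee i0 i1 x1 x1)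
      = (r, Nat.card (Subgroup.centralizer ({x1} : Set H))
          * (Nat.card (Subgroup.centralizer ({x1} : Set H)) * RR i0 i1 H)) := by
    rw [hI, hx1, Nat.lcm_self]
  have E5 : inv2 (ee i0 i1 x1 x2)
      = (r, Nat.card (Subgroup.centralizer ({x1} : Set H))
          * (Nat.card (Subgroup.centralizer ({x2} : Set H)) * RR i0 i1 H)) := by
    rw [hI, hx1, hx2, Nat.lcm_self]
  have E6 : inv2 (ee i0 i1 w w)
      = (s, Nat.card (Subgroup.centralizer ({w} : Set H))
          * (Nat.card (Subgroup.centralizer ({w} : Set H)) * RR i0 i1 H)) := by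
    rw [hI, hw, Nat.lcm_self]
  apply seven_distinct (ee i0 i1 (1 : H) 1) (ee i0 i1 x1 1) (ee i0 i1 x2 1) (ee i0 i1 w 1)
    (ee i0 i1 x1 x1) (ee i0 i1 x1 x2) (ee i0 i1 w w)
  · rw [E0, E1]; exact pair_ne_fst (Ne.symm hr.ne_one)
  · rw [E0, E2]; exact pair_ne_fst (Ne.symm hr.ne_one)
  · rw [E0, E3]; exact pair_ne_fst (Ne.symm hs'.ne_one)
  · rw [E0, E4]; exact pair_ne_fst (Ne.symm hr.ne_one)
  · rw [E0, E5]; exact pair_ne_fst (Ne.symm hr.ne_one)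
  · rw [E0, E6]; exact pair_ne_fst (Ne.symm hs'.ne_one)
  · rw [E1, E2]; exact pair_ne_snd (cancelR (Nat.mul_pos Nat.card_pos hR) hlt.ne)
  · rw [E1, E3]; exact pair_ne_fst hrs
  · rw [E1, E4]; exact pair_ne_snd (cancelL (cpos x1) hR hc1.ne')
  · rw [E1, E5]; exact pair_ne_snd (cancelL (cpos x1) hR hc2.ne')
  · rw [E1, E6]; exact pair_ne_fst hrs
  · rw [E2, E3]; exact pair_ne_fst hrs
  · rw [E2, E4]; exact pair_ne_snd (Ne.symm (crossStrict hR hlt hc1))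
  · rw [E2, E5]; exact pair_ne_snd (swapCancel (cpos x2) hR hc1.ne')
  · rw [E2, E6]; exact pair_ne_fst hrs
  · rw [E3, E4]; exact pair_ne_fst (Ne.symm hrs)
  · rw [E3, E5]; exact pair_ne_fst (Ne.symm hrs)
  · rw [E3, E6]; exact pair_ne_snd (cancelL (cpos w) hR hcw.ne')
  · rw [E4, E5]; exact pair_ne_snd (cancelL (cpos x1) hR hlt.ne)
  · rw [E4, E6]; exact pair_ne_fst hrs
  · rw [E5, E6]; exact pair_ne_fst hrs

end Cases

open Subgroup

open scoped MatrixGroups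

/-- The number of orbits of the natural action of the automorphism group `Aut G`
on the group `G`. -/
noncomputable def omegaAut (G : Type*) [Group G] : ℕ :=
  Nat.card (MulAction.orbitRel.Quotient (MulAut G) G)

/-- If `H` is a finite nonabelian simple group and `k ≥ 2`, then the direct power
`H × ⋯ × H` (`k` factors) has at least 7 automorphism orbits. -/
theorem stmt_4 (H : Type*) [Group H] [Finite H] (hs : IsSimpleGroup H)
    (hna : ¬ ∀ a b : H, a * b = b * a) (k : ℕ) (hk : 2 ≤ k) :
    7 ≤ omegaAut (Fin k → H) := by
  classical
  rw [omegaAut]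
  have hcard1 : 1 < Nat.card H := Finite.one_lt_card_iff_nontrivial.mpr inferInstance
  -- there are two distinct primes dividing the order of `H`
  obtain ⟨p, q, hp, hq, hpq, hpd, hqd⟩ :
      ∃ p q : ℕ, p.Prime ∧ q.Prime ∧ p ≠ q ∧ p ∣ Nat.card H ∧ q ∣ Nat.card H := by
    by_contra hcon
    push_neg at hcon
    have hN1 : Nat.card H ≠ 1 := hcard1.ne'
    have hminfac := Nat.minFac_prime hN1
    have hdvd := Nat.minFac_dvd (Nat.card H)
    have hall : ∀ {d : ℕ}, d.Prime → d ∣ Nat.card H → d = (Nat.card H).minFac := by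
      intro d hd hdd
      by_contra hne
      exact (hcon (Nat.card H).minFac d hminfac hd (fun h => hne h.symm) hdvd) hdd
    have hNpow := Nat.eq_prime_pow_of_unique_prime_dvd (Nat.card_pos).ne' hall
    have hpg : IsPGroup (Nat.card H).minFac H := IsPGroup.of_card hNpow
    haveI : Fact ((Nat.card H).minFac.Prime) := ⟨hminfac⟩
    have hcent : Nontrivial (Subgroup.center H) := IsPGroup.center_nontrivial hpg
    rw [center_eq_bot_of_simple hs hna] at hcent
    have h1 := Finite.one_lt_card_iff_nontrivial.mpr hcent
    rw [Subgroup.card_bot] at h1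
    exact absurd h1 (by omega)
  haveI : Fact p.Prime := ⟨hp⟩
  haveI : Fact q.Prime := ⟨hq⟩
  letI := Fintype.ofFinite H
  obtain ⟨x, hxp⟩ := exists_prime_orderOf_dvd_card (G := H) p
    (by rwa [← Nat.card_eq_fintype_card])
  obtain ⟨y, hyq⟩ := exists_prime_orderOf_dvd_card (G := H) q
    (by rwa [← Nat.card_eq_fintype_card])
  have h01 : (⟨0, by omega⟩ : Fin k) ≠ (⟨1, by omega⟩ : Fin k) := by
    intro h
    have := congrArg Fin.val h
    simpa using this
  by_cases hA : ∀ g : H, orderOf g = 1 ∨ orderOf g = p ∨ orderOf g = q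
  · by_cases hBp : ∀ g g' : H, orderOf g = p → orderOf g' = p →
        Nat.card (Subgroup.centralizer ({g} : Set H))
          = Nat.card (Subgroup.centralizer ({g'} : Set H))
    · by_cases hBq : ∀ g g' : H, orderOf g = q → orderOf g' = q →
          Nat.card (Subgroup.centralizer ({g} : Set H))
            = Nat.card (Subgroup.centralizer ({g'} : Set H))
      · exfalso
        have hb1 := caseC_side hs hp hq hpq hA hBp ⟨x, hxp⟩ ⟨y, hyq⟩
        have hb2 := caseC_side hs hq hp hpq.symm
          (fun g => by
            rcases hA g with h | h | h
            exacts [Or.inl h, Or.inr (Or.inr h), Or.inr (Or.inl h)])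
          hBq ⟨y, hyq⟩ ⟨x, hxp⟩
        have hpart := partition_card hp hq hpq hA
        omega
      · push_neg at hBq
        obtain ⟨y1, y2, hy1, hy2, hne⟩ := hBq
        rcases Ne.lt_or_gt hne with hlt | hlt
        · exact caseB_seven hs hna h01 hq hp hpq.symm hy1 hy2 hxp hlt
        · exact caseB_seven hs hna h01 hq hp hpq.symm hy2 hy1 hxp hlt
    · push_neg at hBp
      obtain ⟨x1, x2, hx1, hx2, hne⟩ := hBp
      rcases Ne.lt_or_gt hne with hlt | hlt
      · exact caseB_seven hs hna h01 hp hq hpq hx1 hx2 hyq hlt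
      · exact caseB_seven hs hna h01 hp hq hpq hx2 hx1 hyq hlt
  · push_neg at hA
    obtain ⟨z, hz1, hzp, hzq⟩ := hA
    exact caseA_seven hs hna h01 hp hq hpq hxp hyq hz1 hzp hzq
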